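/- arXiv:0910.1033 — 2 statements merged into one kernel-verified Lean document; each statement's English description precedes it below -/
import Mathlib

section
/- Let G be a topological group, let Γ be a subgroup of G, and let Q be a subgroup of Γ of finite index. Then the connected component of the identity of the topological closure of Γ is contained in the topological closure of Q. -/
open scoped Pointwise

/-- Let `G` be a topological group, `Γ` a subgroup and `Q` a subgroup
of `Γ` of finite index.  Then the connected component of the identity of the topological
closure of `Γ` (i.e. the connected component of `1` within the subspace
`cl(Γ) ⊆ G`) is contained in the topological closure of `Q`. -/
theorem connectedComponentIn_closure_subset_closure_of_finite_relindex
    {G : Type*} [Group G] [TopologicalSpace G] [IsTopologicalGroup G]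
    (Γ Q : Subgroup G) (hQΓ : Q ≤ Γ) (hfin : Q.relIndex Γ ≠ 0) :
    connectedComponentIn (Γ.topologicalClosure : Set G) 1 ⊆
      (Q.topologicalClosure : Set G) := by
  set C : Subgroup G := Γ.topologicalClosure with hC
  set H : Subgroup C := Q.topologicalClosure.subgroupOf C with hH
  have hΓC : Γ ≤ C := Subgroup.le_topologicalClosure Γ
  -- H is closed in C
  have hHclosed : IsClosed (H : Set C) := by
    have : (H : Set C) = (Subtype.val : C → G) ⁻¹' (Q.topologicalClosure : Set G) := rfl
    rw [this]
    exact (Subgroup.isClosed_topologicalClosure Q).preimage continuous_subtype_val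
  -- the quotient by Q within Γ is finite
  have hfi : (Q.subgroupOf Γ).FiniteIndex := ⟨hfin⟩
  -- surjection from Γ ⧸ Q.subgroupOf Γ onto C ⧸ H
  have hsurj : ∃ f : (Γ ⧸ Q.subgroupOf Γ) → (C ⧸ H), Function.Surjective f := by
    classical
    -- coset representatives
    have hcover : (C : Set G) ⊆ ⋃ (q : Γ ⧸ Q.subgroupOf Γ),
        ((q.out : Γ) : G) • (Q.topologicalClosure : Set G) := by
      have hclosed : IsClosed (⋃ (q : Γ ⧸ Q.subgroupOf Γ),
          ((q.out : Γ) : G) • (Q.topologicalClosure : Set G)) :=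
        isClosed_iUnion_of_finite fun q =>
          (Subgroup.isClosed_topologicalClosure Q).smul _
      have hΓsub : (Γ : Set G) ⊆ ⋃ (q : Γ ⧸ Q.subgroupOf Γ),
          ((q.out : Γ) : G) • (Q.topologicalClosure : Set G) := by
        intro x hx
        refine Set.mem_iUnion.2 ⟨QuotientGroup.mk (⟨x, hx⟩ : Γ), ?_⟩
        have hout : ((QuotientGroup.mk (⟨x, hx⟩ : Γ) : Γ ⧸ Q.subgroupOf Γ).out : Γ)⁻¹
            * ⟨x, hx⟩ ∈ Q.subgroupOf Γ := by
          rw [← QuotientGroup.eq]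
          exact QuotientGroup.out_eq' _
        rw [Set.mem_smul_set_iff_inv_smul_mem]
        have := hout
        simp only [Subgroup.mem_subgroupOf] at this
        exact Q.le_topologicalClosure this
      calc (C : Set G) = closure (Γ : Set G) := rfl
        _ ⊆ _ := closure_minimal hΓsub hclosed
    refine ⟨fun q => QuotientGroup.mk ⟨((q.out : Γ) : G), hΓC (Quotient.out q).2⟩, ?_⟩
    intro y
    obtain ⟨x, rfl⟩ := QuotientGroup.mk_surjective y
    obtain ⟨q, hq⟩ := Set.mem_iUnion.1 (hcover x.2)
    refine ⟨q, ?_⟩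
    rw [QuotientGroup.eq]
    rw [Set.mem_smul_set_iff_inv_smul_mem] at hq
    exact hq
  obtain ⟨f, hf⟩ := hsurj
  have : Finite (C ⧸ H) := Finite.of_surjective f hf
  have hHfi : H.FiniteIndex := Subgroup.finiteIndex_of_finite_quotient (H := H)
  -- H is open and closed, hence contains the connected component of 1
  have hHopen : IsOpen (H : Set C) := Subgroup.isOpen_of_isClosed_of_finiteIndex H hHclosed
  have hclopen : IsClopen (H : Set C) := ⟨hHclosed, hHopen⟩
  have hcc : connectedComponent (1 : C) ⊆ (H : Set C) :=
    hclopen.connectedComponent_subset H.one_mem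
  have h1 : (1 : G) ∈ (C : Set G) := C.one_mem
  rw [connectedComponentIn_eq_image h1]
  rintro x ⟨y, hy, rfl⟩
  exact hcc hy
end

section
/- Let H be a closed subgroup of SO(3, ℝ) which contains the standard subgroup SO(2) consisting of the rotations about the third coordinate axis, i.e. the block matrices diag(A, 1) with A ∈ SO(2, ℝ). Then H is exactly one of: this copy of SO(2); its normalizer { diag(A, det A) : A ∈ O(2, ℝ) }, which is isomorphic to O(2); or the full group SO(3, ℝ). -/
/-- `SO(3, ℝ)`: the subgroup of the orthogonal group `O(3, ℝ)` of matrices of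
determinant `1`. -/
def SO3 : Subgroup ↥(Matrix.orthogonalGroup (Fin 3) ℝ) :=
  MonoidHom.ker
    (Matrix.detMonoidHom.comp (Matrix.orthogonalGroup (Fin 3) ℝ).subtype)

/-- The 3×3 block-diagonal matrix `diag(A, lam)` with upper-left 2×2 block `A` and
lower-right entry `lam`. -/
def diagBlock (A : Matrix (Fin 2) (Fin 2) ℝ) (lam : ℝ) : Matrix (Fin 3) (Fin 3) ℝ :=
  Matrix.of fun i j =>
    if hi : (i : ℕ) < 2 then
      if hj : (j : ℕ) < 2 then A ⟨i, hi⟩ ⟨j, hj⟩ else 0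
    else if (j : ℕ) < 2 then 0 else lam

/-- The standard copy of `SO(2)` in `SO(3, ℝ)`: rotations about the third coordinate
axis, i.e. the matrices `diag(A, 1)` with `A ∈ SO(2, ℝ)`. -/
def stdSO2 : Set ↥SO3 :=
  {x | ∃ A : Matrix (Fin 2) (Fin 2) ℝ, A ∈ Matrix.orthogonalGroup (Fin 2) ℝ ∧
    A.det = 1 ∧ ((x : ↥(Matrix.orthogonalGroup (Fin 3) ℝ)) : Matrix (Fin 3) (Fin 3) ℝ)
      = diagBlock A 1}

/-- The normalizer of the standard `SO(2)` in `SO(3, ℝ)`: the matrices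
`diag(A, det A)` with `A ∈ O(2, ℝ)`; it is isomorphic to `O(2)`. -/
def stdO2 : Set ↥SO3 :=
  {x | ∃ A : Matrix (Fin 2) (Fin 2) ℝ, A ∈ Matrix.orthogonalGroup (Fin 2) ℝ ∧
    ((x : ↥(Matrix.orthogonalGroup (Fin 3) ℝ)) : Matrix (Fin 3) (Fin 3) ℝ)
      = diagBlock A A.det}

section Aux
open Matrix Real

lemma diagBlock_eq (A : Matrix (Fin 2) (Fin 2) ℝ) (lam : ℝ) :
    diagBlock A lam = !![A 0 0, A 0 1, 0; A 1 0, A 1 1, 0; 0, 0, lam] := by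
  ext i j
  fin_cases i <;> fin_cases j <;> simp [diagBlock]

def mat (x : ↥SO3) : Matrix (Fin 3) (Fin 3) ℝ :=
  ((x : ↥(Matrix.orthogonalGroup (Fin 3) ℝ)) : Matrix (Fin 3) (Fin 3) ℝ)

lemma mat_orth (x : ↥SO3) : mat x * (mat x)ᵀ = 1 := by
  have := (Matrix.mem_orthogonalGroup_iff _ _).mp (x : ↥(Matrix.orthogonalGroup (Fin 3) ℝ)).2
  simpa [mat, Matrix.star_eq_conjTranspose, Matrix.conjTranspose_eq_transpose_of_trivial] using this

lemma mat_orth' (x : ↥SO3) : (mat x)ᵀ * mat x = 1 := by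
  have := (Matrix.mem_orthogonalGroup_iff' _ _).mp (x : ↥(Matrix.orthogonalGroup (Fin 3) ℝ)).2
  simpa [mat, Matrix.star_eq_conjTranspose, Matrix.conjTranspose_eq_transpose_of_trivial] using this

lemma mat_det (x : ↥SO3) : (mat x).det = 1 := x.2

lemma diagBlock_det (A : Matrix (Fin 2) (Fin 2) ℝ) (a : ℝ) :
    (diagBlock A a).det = a * A.det := by
  rw [diagBlock_eq, Matrix.det_fin_three, Matrix.det_fin_two]
  simp; ring

lemma mat_inv (x : ↥SO3) : mat x⁻¹ = (mat x)ᵀ := by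
  have h1 : ((x⁻¹ : ↥SO3) : ↥(Matrix.orthogonalGroup (Fin 3) ℝ))
      = (x : ↥(Matrix.orthogonalGroup (Fin 3) ℝ))⁻¹ := rfl
  have h2 := (Unitary.star_eq_inv (x : ↥(Matrix.orthogonalGroup (Fin 3) ℝ))).symm
  unfold mat
  rw [h1, h2, Unitary.coe_star, Matrix.star_eq_conjTranspose,
    Matrix.conjTranspose_eq_transpose_of_trivial]

lemma mem_O2 (A : Matrix (Fin 2) (Fin 2) ℝ) :
    A ∈ Matrix.orthogonalGroup (Fin 2) ℝ ↔ A * Aᵀ = 1 := by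
  rw [Matrix.mem_orthogonalGroup_iff]

lemma classify (x : ↥SO3) (ε : ℝ) (hε : ε * ε = 1) (h : mat x 2 2 = ε) :
    ∃ A : Matrix (Fin 2) (Fin 2) ℝ, A ∈ Matrix.orthogonalGroup (Fin 2) ℝ ∧
      A.det = ε ∧ mat x = diagBlock A ε := by
  set m := mat x with hm
  have hcol := congrFun (congrFun (mat_orth' x) 2) 2
  simp only [Matrix.mul_apply, Fin.sum_univ_three, Matrix.transpose_apply,
    Matrix.one_apply_eq, ← hm] at hcol
  have hrow := congrFun (congrFun (mat_orth x) 2) 2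
  simp only [Matrix.mul_apply, Fin.sum_univ_three, Matrix.transpose_apply,
    Matrix.one_apply_eq, ← hm] at hrow
  rw [h] at hcol hrow
  have h02 : m 0 2 = 0 := by
    have : m 0 2 * m 0 2 = 0 := by nlinarith [mul_self_nonneg (m 0 2), mul_self_nonneg (m 1 2)]
    exact mul_self_eq_zero.mp this
  have h12 : m 1 2 = 0 := by
    have : m 1 2 * m 1 2 = 0 := by nlinarith [mul_self_nonneg (m 0 2), mul_self_nonneg (m 1 2)]
    exact mul_self_eq_zero.mp this
  have h20 : m 2 0 = 0 := by
    have : m 2 0 * m 2 0 = 0 := by nlinarith [mul_self_nonneg (m 2 0), mul_self_nonneg (m 2 1)]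
    exact mul_self_eq_zero.mp this
  have h21 : m 2 1 = 0 := by
    have : m 2 1 * m 2 1 = 0 := by nlinarith [mul_self_nonneg (m 2 0), mul_self_nonneg (m 2 1)]
    exact mul_self_eq_zero.mp this
  set A : Matrix (Fin 2) (Fin 2) ℝ := !![m 0 0, m 0 1; m 1 0, m 1 1] with hA
  have heq : m = diagBlock A ε := by
    rw [diagBlock_eq]
    ext i j
    fin_cases i <;> fin_cases j <;> simp [hA, h02, h12, h20, h21, h]
  have hdet : A.det = ε := by
    have hd := mat_det x
    rw [← hm, heq, diagBlock_det] at hd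
    linear_combination ε * hd - A.det * hε
  refine ⟨A, ?_, hdet, heq⟩
  rw [mem_O2]
  have e00 := congrFun (congrFun (mat_orth x) 0) 0
  have e01 := congrFun (congrFun (mat_orth x) 0) 1
  have e10 := congrFun (congrFun (mat_orth x) 1) 0
  have e11 := congrFun (congrFun (mat_orth x) 1) 1
  simp only [Matrix.mul_apply, Fin.sum_univ_three, Matrix.transpose_apply, ← hm] at e00 e01 e10 e11
  norm_num [Matrix.one_apply] at e00 e01 e10 e11
  have z0 : m 0 2 * m 0 2 = 0 := by rw [h02]; ring
  have z1 : m 1 2 * m 1 2 = 0 := by rw [h12]; ring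
  have z2 : m 0 2 * m 1 2 = 0 := by rw [h02]; ring
  ext i j
  fin_cases i <;> fin_cases j <;>
    simp [hA, Matrix.mul_apply, Fin.sum_univ_two, Matrix.one_apply, Matrix.transpose_apply,
      Matrix.vecHead, Matrix.vecTail] <;>
    linarith [e00, e01, e10, e11, z0, z1, z2]

lemma stdSO2_subset_stdO2 : stdSO2 ⊆ stdO2 := by
  rintro x ⟨A, h1, h2, h3⟩
  exact ⟨A, h1, by rwa [h2]⟩

lemma mem_stdSO2_of (x : ↥SO3) (h : mat x 2 2 = 1) : x ∈ stdSO2 := by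
  obtain ⟨A, hO, hdet, heq⟩ := classify x 1 (by norm_num) h
  exact ⟨A, hO, hdet, heq⟩

lemma mem_stdO2_of_neg (x : ↥SO3) (h : mat x 2 2 = -1) : x ∈ stdO2 := by
  obtain ⟨A, hO, hdet, heq⟩ := classify x (-1) (by norm_num) h
  exact ⟨A, hO, by rwa [hdet]⟩

lemma row_unit (x : ↥SO3) :
    mat x 2 0 * mat x 2 0 + mat x 2 1 * mat x 2 1 + mat x 2 2 * mat x 2 2 = 1 := by
  have := congrFun (congrFun (mat_orth x) 2) 2
  simpa [Matrix.mul_apply, Fin.sum_univ_three, Matrix.transpose_apply,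
    Matrix.one_apply_eq] using this

lemma col_unit (x : ↥SO3) :
    mat x 0 2 * mat x 0 2 + mat x 1 2 * mat x 1 2 + mat x 2 2 * mat x 2 2 = 1 := by
  have := congrFun (congrFun (mat_orth' x) 2) 2
  simpa [Matrix.mul_apply, Fin.sum_univ_three, Matrix.transpose_apply,
    Matrix.one_apply_eq] using this

lemma entry_mem_Icc (x : ↥SO3) : mat x 2 2 ∈ Set.Icc (-1 : ℝ) 1 := by
  have h := row_unit x
  constructor <;> nlinarith [mul_self_nonneg (mat x 2 0), mul_self_nonneg (mat x 2 1),
    mul_self_nonneg (mat x 2 2 - 1), mul_self_nonneg (mat x 2 2 + 1)]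

lemma entry_lt_of_not_mem (x : ↥SO3) (hx : x ∉ stdO2) :
    mat x 2 2 ∈ Set.Ioo (-1 : ℝ) 1 := by
  obtain ⟨h1, h2⟩ := entry_mem_Icc x
  refine ⟨lt_of_le_of_ne h1 ?_, lt_of_le_of_ne h2 ?_⟩
  · intro h; exact hx (mem_stdO2_of_neg x h.symm)
  · intro h; exact hx (stdSO2_subset_stdO2 (mem_stdSO2_of x h))

noncomputable def rot (θ : ℝ) : Matrix (Fin 2) (Fin 2) ℝ := !![cos θ, -sin θ; sin θ, cos θ]

lemma rot_orth (θ : ℝ) : rot θ * (rot θ)ᵀ = 1 := by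
  ext i j
  fin_cases i <;> fin_cases j <;>
    simp [rot, Matrix.mul_apply, Fin.sum_univ_two, Matrix.one_apply, Matrix.transpose_apply,
      Matrix.vecHead, Matrix.vecTail] <;>
    nlinarith [sin_sq_add_cos_sq θ]

lemma rot_det (θ : ℝ) : (rot θ).det = 1 := by
  simp [rot, Matrix.det_fin_two]
  nlinarith [sin_sq_add_cos_sq θ]

lemma diagBlock_mul (A B : Matrix (Fin 2) (Fin 2) ℝ) (a b : ℝ) :
    diagBlock A a * diagBlock B b = diagBlock (A * B) (a * b) := by
  rw [diagBlock_eq, diagBlock_eq, diagBlock_eq]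
  ext i j
  fin_cases i <;> fin_cases j <;>
    simp [Matrix.mul_apply, Fin.sum_univ_three, Matrix.vecHead, Matrix.vecTail]

lemma diagBlock_transpose (A : Matrix (Fin 2) (Fin 2) ℝ) (a : ℝ) :
    (diagBlock A a)ᵀ = diagBlock Aᵀ a := by
  rw [diagBlock_eq, diagBlock_eq]
  ext i j; fin_cases i <;> fin_cases j <;> simp

lemma diagBlock_one : diagBlock 1 1 = (1 : Matrix (Fin 3) (Fin 3) ℝ) := by
  rw [diagBlock_eq]
  ext i j; fin_cases i <;> fin_cases j <;> simp [Matrix.one_apply, Matrix.vecHead, Matrix.vecTail]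

def mkSO3 (m : Matrix (Fin 3) (Fin 3) ℝ) (horth : m * mᵀ = 1) (hdet : m.det = 1) : ↥SO3 :=
  ⟨⟨m, (Matrix.mem_orthogonalGroup_iff _ _).mpr (by
    simpa [Matrix.star_eq_conjTranspose, Matrix.conjTranspose_eq_transpose_of_trivial])⟩,
    hdet⟩

noncomputable def Rθ (θ : ℝ) : ↥SO3 :=
  mkSO3 (diagBlock (rot θ) 1)
    (by rw [diagBlock_transpose, diagBlock_mul, rot_orth, mul_one, diagBlock_one])
    (by rw [diagBlock_det, rot_det, one_mul])

lemma Rθ_mem_stdSO2 (θ : ℝ) : Rθ θ ∈ stdSO2 :=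
  ⟨rot θ, (mem_O2 _).mpr (rot_orth θ), rot_det θ, rfl⟩

lemma mat_mul (x y : ↥SO3) : mat (x * y) = mat x * mat y := rfl

lemma mat_Rθ (θ : ℝ) : mat (Rθ θ) = diagBlock (rot θ) 1 := rfl

lemma combo_val (x y : ↥SO3) (θ : ℝ) :
    mat (x * Rθ θ * y) 2 2 =
      mat x 2 2 * mat y 2 2
      + (mat x 2 0 * mat y 0 2 + mat x 2 1 * mat y 1 2) * cos θ
      + (mat x 2 1 * mat y 0 2 - mat x 2 0 * mat y 1 2) * sin θ := by
  rw [mat_mul, mat_mul, mat_Rθ, diagBlock_eq]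
  simp [Matrix.mul_apply, Fin.sum_univ_three, rot]
  ring

lemma exists_cos_sin (a b : ℝ) (h : a ^ 2 + b ^ 2 = 1) : ∃ θ, cos θ = a ∧ sin θ = b := by
  have ha1 : -1 ≤ a := by nlinarith [sq_nonneg b]
  have ha2 : a ≤ 1 := by nlinarith [sq_nonneg b]
  rcases le_or_gt 0 b with hb | hb
  · refine ⟨arccos a, cos_arccos ha1 ha2, ?_⟩
    rw [sin_arccos]
    rw [show (1 : ℝ) - a ^ 2 = b ^ 2 by linarith]
    exact Real.sqrt_sq hb
  · refine ⟨-arccos a, by rw [cos_neg]; exact cos_arccos ha1 ha2, ?_⟩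
    rw [sin_neg, sin_arccos]
    rw [show (1 : ℝ) - a ^ 2 = b ^ 2 by linarith, show b ^ 2 = (-b) ^ 2 by ring]
    rw [Real.sqrt_sq (by linarith)]
    ring

/-- Key combination lemma: from `x, y ∈ H` we can realise, as the `(2,2)` entry of an
element of `H`, the value `x₂₂ y₂₂ + √(1-x₂₂²) √(1-y₂₂²) s` for any `s ∈ [-1, 1]`. -/
lemma combo (H : Subgroup ↥SO3) (hSO2 : stdSO2 ⊆ (H : Set ↥SO3)) (x y : ↥SO3)
    (hx : x ∈ H) (hy : y ∈ H) (s : ℝ) (hs : s ∈ Set.Icc (-1 : ℝ) 1) :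
    ∃ z ∈ H, mat z 2 2 = mat x 2 2 * mat y 2 2
      + Real.sqrt (1 - mat x 2 2 ^ 2) * Real.sqrt (1 - mat y 2 2 ^ 2) * s := by
  set u0 := mat x 2 0; set u1 := mat x 2 1; set u2 := mat x 2 2
  set v0 := mat y 0 2; set v1 := mat y 1 2; set v2 := mat y 2 2
  have hu : u0 * u0 + u1 * u1 + u2 * u2 = 1 := row_unit x
  have hv : v0 * v0 + v1 * v1 + v2 * v2 = 1 := col_unit y
  set P := u0 * v0 + u1 * v1 with hP
  set Q := u1 * v0 - u0 * v1 with hQ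
  have hPQ : P ^ 2 + Q ^ 2 = (1 - u2 ^ 2) * (1 - v2 ^ 2) := by
    have h1 : u0 * u0 + u1 * u1 = 1 - u2 ^ 2 := by rw [sq]; linarith
    have h2 : v0 * v0 + v1 * v1 = 1 - v2 ^ 2 := by rw [sq]; linarith
    rw [← h1, ← h2, hP, hQ]; ring
  have hu2 : 1 - u2 ^ 2 ≥ 0 := by nlinarith [mul_self_nonneg u0, mul_self_nonneg u1]
  have hv2 : 1 - v2 ^ 2 ≥ 0 := by nlinarith [mul_self_nonneg v0, mul_self_nonneg v1]
  set r := Real.sqrt (1 - u2 ^ 2) * Real.sqrt (1 - v2 ^ 2) with hr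
  have hr2 : r ^ 2 = P ^ 2 + Q ^ 2 := by
    rw [hr, hPQ, mul_pow, Real.sq_sqrt hu2, Real.sq_sqrt hv2]
  have hrnn : 0 ≤ r := mul_nonneg (Real.sqrt_nonneg _) (Real.sqrt_nonneg _)
  rcases eq_or_lt_of_le hrnn with hr0 | hrpos
  · -- r = 0 : P = Q = 0, take θ = 0
    have hP0 : P = 0 := by nlinarith [sq_nonneg P, sq_nonneg Q]
    have hQ0 : Q = 0 := by nlinarith [sq_nonneg P, sq_nonneg Q]
    refine ⟨x * Rθ 0 * y, ?_, ?_⟩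
    · exact mul_mem (mul_mem hx (hSO2 (Rθ_mem_stdSO2 0))) hy
    · rw [combo_val x y 0, ← hP, ← hQ, hP0, hQ0,
        show mat x 2 2 = u2 from rfl, show mat y 2 2 = v2 from rfl, ← hr0]
      ring
  · -- r > 0
    set t := Real.sqrt (1 - s ^ 2) with ht
    have hst : s ^ 2 + t ^ 2 = 1 := by
      rw [ht, Real.sq_sqrt (by nlinarith [hs.1, hs.2])]; ring
    have hrne : r ≠ 0 := ne_of_gt hrpos
    have hone : ((P * s - Q * t) / r) ^ 2 + ((Q * s + P * t) / r) ^ 2 = 1 := by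
      rw [div_pow, div_pow, ← add_div,
        show (P * s - Q * t) ^ 2 + (Q * s + P * t) ^ 2 = (P ^ 2 + Q ^ 2) * (s ^ 2 + t ^ 2) by ring,
        ← hr2, hst, mul_one]
      exact div_self (pow_ne_zero 2 hrne)
    obtain ⟨θ, hθc, hθs⟩ := exists_cos_sin ((P * s - Q * t) / r) ((Q * s + P * t) / r) hone
    refine ⟨x * Rθ θ * y, ?_, ?_⟩
    · exact mul_mem (mul_mem hx (hSO2 (Rθ_mem_stdSO2 θ))) hy
    · rw [combo_val x y θ, ← hP, ← hQ, hθc, hθs,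
        show mat x 2 2 = u2 from rfl, show mat y 2 2 = v2 from rfl]
      have key : P * ((P * s - Q * t) / r) + Q * ((Q * s + P * t) / r) = r * s := by
        have h1 : P * (P * s - Q * t) + Q * (Q * s + P * t) = r ^ 2 * s := by
          rw [hr2]; ring
        calc P * ((P * s - Q * t) / r) + Q * ((Q * s + P * t) / r)
            = (P * (P * s - Q * t) + Q * (Q * s + P * t)) / r := by ring
          _ = r ^ 2 * s / r := by rw [h1]
          _ = r * s := by rw [sq]; field_simp
      rw [← key]; ring

/-- The set of achievable (2,2)-entries of elements of `H`. -/
def entSet (H : Subgroup ↥SO3) : Set ℝ := {c | ∃ z ∈ H, mat z 2 2 = c}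

/-- The corresponding set of angles. -/
def angSet (H : Subgroup ↥SO3) : Set ℝ := {γ | γ ∈ Set.Icc 0 π ∧ cos γ ∈ entSet H}

lemma one_mem_entSet (H : Subgroup ↥SO3) : (1 : ℝ) ∈ entSet H :=
  ⟨1, one_mem H, Matrix.one_apply_eq 2⟩

lemma zero_mem_angSet (H : Subgroup ↥SO3) : (0 : ℝ) ∈ angSet H :=
  ⟨⟨le_refl 0, Real.pi_pos.le⟩, by rw [Real.cos_zero]; exact one_mem_entSet H⟩

lemma sqrt_one_sub_cos_sq {γ : ℝ} (h0 : 0 ≤ γ) (hπ : γ ≤ π) :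
    Real.sqrt (1 - cos γ ^ 2) = sin γ := by
  rw [show (1 : ℝ) - cos γ ^ 2 = sin γ ^ 2 by nlinarith [sin_sq_add_cos_sq γ]]
  exact Real.sqrt_sq (sin_nonneg_of_nonneg_of_le_pi h0 hπ)

lemma ang_combine (H : Subgroup ↥SO3) (hSO2 : stdSO2 ⊆ (H : Set ↥SO3)) {β γ δ : ℝ}
    (hβ : β ∈ angSet H) (hγ : γ ∈ angSet H) (hδ : δ ∈ Set.Icc 0 π)
    (h1 : |β - γ| ≤ δ) (h2 : δ ≤ β + γ) (h3 : δ + β + γ ≤ 2 * π) :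
    δ ∈ angSet H := by
  obtain ⟨⟨hβ0, hβπ⟩, x, hxH, hxe⟩ := hβ
  obtain ⟨⟨hγ0, hγπ⟩, y, hyH, hye⟩ := hγ
  obtain ⟨hδ0, hδπ⟩ := hδ
  -- bounds on cos δ
  have hub : cos δ ≤ cos (β - γ) := by
    rw [← Real.cos_abs (β - γ)]
    exact Real.cos_le_cos_of_nonneg_of_le_pi (abs_nonneg _) hδπ h1
  have hlb : cos (β + γ) ≤ cos δ := by
    rcases le_or_gt (β + γ) π with h | h
    · exact Real.cos_le_cos_of_nonneg_of_le_pi hδ0 h h2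
    · rw [← Real.cos_two_pi_sub (β + γ)]
      exact Real.cos_le_cos_of_nonneg_of_le_pi hδ0 (by linarith) (by linarith)
  rw [Real.cos_sub] at hub
  rw [Real.cos_add] at hlb
  have hsβ : 0 ≤ sin β := sin_nonneg_of_nonneg_of_le_pi hβ0 hβπ
  have hsγ : 0 ≤ sin γ := sin_nonneg_of_nonneg_of_le_pi hγ0 hγπ
  have hsprod : 0 ≤ sin β * sin γ := mul_nonneg hsβ hsγ
  rcases eq_or_lt_of_le hsprod with hz | hpos
  · -- sin β * sin γ = 0 : forced value
    have hcd : cos δ = cos β * cos γ := by rw [← hz] at hub hlb; linarith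
    obtain ⟨z, hzH, hze⟩ := combo H hSO2 x y hxH hyH 0 ⟨by norm_num, by norm_num⟩
    refine ⟨⟨hδ0, hδπ⟩, z, hzH, ?_⟩
    rw [hze, hxe, hye, hcd]; ring
  · set s := (cos δ - cos β * cos γ) / (sin β * sin γ) with hsdef
    have hs : s ∈ Set.Icc (-1 : ℝ) 1 := by
      constructor
      · rw [hsdef, le_div_iff₀ hpos]; linarith
      · rw [hsdef, div_le_iff₀ hpos]; linarith
    obtain ⟨z, hzH, hze⟩ := combo H hSO2 x y hxH hyH s hs
    refine ⟨⟨hδ0, hδπ⟩, z, hzH, ?_⟩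
    rw [hze, hxe, hye, sqrt_one_sub_cos_sq hβ0 hβπ, sqrt_one_sub_cos_sq hγ0 hγπ, hsdef]
    field_simp
    rw [mul_div_cancel_left₀ _ hpos.ne']; ring

lemma angSet_step (H : Subgroup ↥SO3) (hSO2 : stdSO2 ⊆ (H : Set ↥SO3)) {α : ℝ}
    (hα : α ∈ angSet H) (h0 : 0 < α) (hπ : α < π) :
    ∃ s : ℝ, 0 < s ∧ s ≤ 2 * π / 3 ∧ Set.Icc 0 s ⊆ angSet H := by
  rcases le_or_gt α (2 * π / 3) with h | h
  · refine ⟨α, h0, h, fun δ ⟨hδ0, hδα⟩ => ?_⟩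
    refine ang_combine H hSO2 hα hα ⟨hδ0, by linarith⟩ ?_ ?_ ?_
    · rw [sub_self, abs_zero]; exact hδ0
    · linarith
    · linarith
  · refine ⟨2 * π - 2 * α, by linarith, by linarith, fun δ ⟨hδ0, hδs⟩ => ?_⟩
    have hpi : (0:ℝ) < π := Real.pi_pos
    refine ang_combine H hSO2 hα hα ⟨hδ0, by linarith⟩ ?_ ?_ ?_
    · rw [sub_self, abs_zero]; exact hδ0
    · linarith
    · linarith

lemma angSet_full (H : Subgroup ↥SO3) (hSO2 : stdSO2 ⊆ (H : Set ↥SO3)) {α : ℝ}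
    (hα : α ∈ angSet H) (h0 : 0 < α) (hπ : α < π) :
    ∀ δ ∈ Set.Icc (0 : ℝ) π, δ ∈ angSet H := by
  obtain ⟨s, hs0, _, hsub⟩ := angSet_step H hSO2 hα h0 hπ
  have key : ∀ n : ℕ, ∀ δ ∈ Set.Icc (0 : ℝ) π, δ ≤ n * s → δ ∈ angSet H := by
    intro n
    induction n with
    | zero =>
      intro δ ⟨hδ0, _⟩ hle
      norm_num at hle
      have : δ = 0 := le_antisymm hle hδ0
      rw [this]; exact zero_mem_angSet H
    | succ n ih =>
      intro δ ⟨hδ0, hδπ⟩ hle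
      rcases le_or_gt δ (n * s) with h | h
      · exact ih δ ⟨hδ0, hδπ⟩ h
      · rcases Nat.eq_zero_or_pos n with hn | hn
        · subst hn
          refine hsub ⟨hδ0, ?_⟩
          simpa using hle
        · have hβmem : δ - s ∈ angSet H := by
            refine ih (δ - s) ⟨?_, by linarith⟩ ?_
            · have : (1 : ℝ) * s ≤ n * s := by
                apply mul_le_mul_of_nonneg_right _ hs0.le
                exact_mod_cast hn
              linarith
            · push_cast at hle ⊢; linarith
          have hsmem : s ∈ angSet H := hsub ⟨hs0.le, le_refl s⟩
          have hsδ : s ≤ δ := by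
            have h1n : (1 : ℝ) * s ≤ n * s := by
              apply mul_le_mul_of_nonneg_right _ hs0.le
              exact_mod_cast hn
            linarith
          refine ang_combine H hSO2 hβmem hsmem ⟨hδ0, hδπ⟩ ?_ ?_ ?_
          · rw [abs_sub_le_iff]
            constructor <;> linarith
          · linarith
          · linarith
  intro δ hδ
  obtain ⟨n, hn⟩ := exists_nat_ge (π / s)
  refine key n δ hδ ?_
  rw [div_le_iff₀ hs0] at hn
  linarith [hδ.2]

lemma entSet_full (H : Subgroup ↥SO3) (hSO2 : stdSO2 ⊆ (H : Set ↥SO3))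
    (g : ↥SO3) (hgH : g ∈ H) (hg : g ∉ stdO2) :
    ∀ c ∈ Set.Icc (-1 : ℝ) 1, c ∈ entSet H := by
  obtain ⟨ha1, ha2⟩ := entry_lt_of_not_mem g hg
  set a := mat g 2 2 with hadef
  have hαmem : Real.arccos a ∈ angSet H := by
    refine ⟨⟨Real.arccos_nonneg a, Real.arccos_le_pi a⟩, g, hgH, ?_⟩
    rw [Real.cos_arccos ha1.le ha2.le]
  have hα0 : 0 < Real.arccos a := Real.arccos_pos.mpr ha2
  have hαπ : Real.arccos a < π := by
    rcases lt_or_eq_of_le (Real.arccos_le_pi a) with h | h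
    · exact h
    · exfalso
      have : cos (Real.arccos a) = cos π := by rw [h]
      rw [Real.cos_arccos ha1.le ha2.le, Real.cos_pi] at this
      linarith
  intro c hc
  have := angSet_full H hSO2 hαmem hα0 hαπ (Real.arccos c)
    ⟨Real.arccos_nonneg c, Real.arccos_le_pi c⟩
  obtain ⟨_, z, hzH, hze⟩ := this
  exact ⟨z, hzH, by rwa [Real.cos_arccos hc.1 hc.2] at hze⟩

lemma Rθ_mul_col (θ : ℝ) (z : ↥SO3) :
    mat (Rθ θ * z) 0 2 = cos θ * mat z 0 2 - sin θ * mat z 1 2 ∧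
    mat (Rθ θ * z) 1 2 = sin θ * mat z 0 2 + cos θ * mat z 1 2 ∧
    mat (Rθ θ * z) 2 2 = mat z 2 2 := by
  refine ⟨?_, ?_, ?_⟩ <;>
    (rw [mat_mul, mat_Rθ, diagBlock_eq]
     simp [Matrix.mul_apply, Fin.sum_univ_three, rot]
     try ring)

lemma eq_top_of_full (H : Subgroup ↥SO3) (hSO2 : stdSO2 ⊆ (H : Set ↥SO3))
    (hfull : ∀ c ∈ Set.Icc (-1 : ℝ) 1, c ∈ entSet H) : H = ⊤ := by
  rw [Subgroup.eq_top_iff']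
  intro x
  have hx22 : mat x 2 2 ∈ Set.Icc (-1 : ℝ) 1 := entry_mem_Icc x
  obtain ⟨z, hzH, hze⟩ := hfull (mat x 2 2) hx22
  set x0 := mat x 0 2 with hx0; set x1 := mat x 1 2 with hx1
  set z0 := mat z 0 2 with hz0; set z1 := mat z 1 2 with hz1
  have hcx : x0 * x0 + x1 * x1 + mat x 2 2 * mat x 2 2 = 1 := col_unit x
  have hcz : z0 * z0 + z1 * z1 + mat x 2 2 * mat x 2 2 = 1 := by
    have := col_unit z; rw [hze] at this; exact this
  have hρeq : z0 * z0 + z1 * z1 = x0 * x0 + x1 * x1 := by linarith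
  have hρnn : 0 ≤ z0 * z0 + z1 * z1 := by nlinarith [mul_self_nonneg z0, mul_self_nonneg z1]
  -- find θ rotating (z0, z1) to (x0, x1)
  have hrot : ∃ θ, cos θ * z0 - sin θ * z1 = x0 ∧ sin θ * z0 + cos θ * z1 = x1 := by
    rcases eq_or_lt_of_le hρnn with hρ0 | hρpos
    · have hzz0 : z0 = 0 := by nlinarith [mul_self_nonneg z0, mul_self_nonneg z1]
      have hzz1 : z1 = 0 := by nlinarith [mul_self_nonneg z0, mul_self_nonneg z1]
      have hxx0 : x0 = 0 := by nlinarith [mul_self_nonneg x0, mul_self_nonneg x1]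
      have hxx1 : x1 = 0 := by nlinarith [mul_self_nonneg x0, mul_self_nonneg x1]
      exact ⟨0, by rw [hzz0, hzz1, hxx0]; ring, by rw [hzz0, hzz1, hxx1]; ring⟩
    · set ρ := z0 * z0 + z1 * z1 with hρ
      have hρne : ρ ≠ 0 := ne_of_gt hρpos
      obtain ⟨θ, hc, hs⟩ := exists_cos_sin ((z0 * x0 + z1 * x1) / ρ) ((z0 * x1 - z1 * x0) / ρ)
        (by
          rw [div_pow, div_pow, ← add_div,
            show (z0 * x0 + z1 * x1) ^ 2 + (z0 * x1 - z1 * x0) ^ 2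
              = (z0 * z0 + z1 * z1) * (x0 * x0 + x1 * x1) by ring, ← hρeq, ← hρ, ← sq]
          exact div_self (pow_ne_zero 2 hρne))
      have hzx : z0 * z0 + z1 * z1 = x0 * x0 + x1 * x1 := hρ.symm.trans hρeq
      refine ⟨θ, ?_, ?_⟩
      · rw [hc, hs, div_mul_eq_mul_div, div_mul_eq_mul_div, div_sub_div_same,
          show (z0 * x0 + z1 * x1) * z0 - (z0 * x1 - z1 * x0) * z1
            = (z0 * z0 + z1 * z1) * x0 by ring, ← hρ, mul_comm, mul_div_assoc,
          div_self hρne, mul_one]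
      · rw [hc, hs, div_mul_eq_mul_div, div_mul_eq_mul_div, ← add_div,
          show (z0 * x1 - z1 * x0) * z0 + (z0 * x0 + z1 * x1) * z1
            = (z0 * z0 + z1 * z1) * x1 by ring, ← hρ, mul_comm, mul_div_assoc,
          div_self hρne, mul_one]
  obtain ⟨θ, hθ0, hθ1⟩ := hrot
  have hwH : Rθ θ * z ∈ H := mul_mem (hSO2 (Rθ_mem_stdSO2 θ)) hzH
  obtain ⟨hw0, hw1, hw2⟩ := Rθ_mul_col θ z
  have hc0 : mat (Rθ θ * z) 0 2 = mat x 0 2 := by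
    rw [hw0, ← hz0, ← hz1, ← hx0]; linarith [hθ0]
  have hc1 : mat (Rθ θ * z) 1 2 = mat x 1 2 := by
    rw [hw1, ← hz0, ← hz1, ← hx1]; linarith [hθ1]
  have hc2 : mat (Rθ θ * z) 2 2 = mat x 2 2 := by rw [hw2, hze]
  have hy22 : mat ((Rθ θ * z)⁻¹ * x) 2 2 = 1 := by
    rw [mat_mul, mat_inv]
    have hexp : ((mat (Rθ θ * z))ᵀ * mat x) 2 2
        = mat (Rθ θ * z) 0 2 * mat x 0 2 + mat (Rθ θ * z) 1 2 * mat x 1 2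
          + mat (Rθ θ * z) 2 2 * mat x 2 2 := by
      simp [Matrix.mul_apply, Fin.sum_univ_three, Matrix.transpose_apply]
    rw [hexp, hc0, hc1, hc2]
    exact col_unit x
  have hyH : (Rθ θ * z)⁻¹ * x ∈ H := hSO2 (mem_stdSO2_of _ hy22)
  have hxe : (Rθ θ * z) * ((Rθ θ * z)⁻¹ * x) = x := by group
  rw [← hxe]
  exact mul_mem hwH hyH

lemma det_pm (A : Matrix (Fin 2) (Fin 2) ℝ) (hA : A ∈ Matrix.orthogonalGroup (Fin 2) ℝ) :
    A.det = 1 ∨ A.det = -1 := by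
  have h := congrArg Matrix.det ((mem_O2 A).mp hA)
  rw [Matrix.det_mul, Matrix.det_transpose, Matrix.det_one] at h
  exact mul_self_eq_one_iff.mp h

lemma eq_stdO2 (H : Subgroup ↥SO3) (hSO2 : stdSO2 ⊆ (H : Set ↥SO3))
    (hsub : (H : Set ↥SO3) ⊆ stdO2) (g : ↥SO3) (hgH : g ∈ H) (hg : g ∉ stdSO2) :
    (H : Set ↥SO3) = stdO2 := by
  apply subset_antisymm hsub
  obtain ⟨A, hA, hgA'⟩ := hsub hgH
  have hgA : mat g = diagBlock A A.det := hgA'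
  have hdA : A.det = -1 := by
    rcases det_pm A hA with h | h
    · exact absurd ⟨A, hA, h, by show mat g = diagBlock A 1; rw [hgA, h]⟩ hg
    · exact h
  intro y hy
  obtain ⟨B, hB, hyB'⟩ := hy
  have hyB : mat y = diagBlock B B.det := hyB'
  rcases det_pm B hB with hdB | hdB
  · exact hSO2 ⟨B, hB, hdB, by show mat y = diagBlock B 1; rw [hyB, hdB]⟩
  · have hmem : g⁻¹ * y ∈ stdSO2 := by
      refine ⟨Aᵀ * B, ?_, ?_, ?_⟩
      · rw [mem_O2, Matrix.transpose_mul, Matrix.transpose_transpose, mul_assoc,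
          ← mul_assoc B, (mem_O2 B).mp hB, one_mul]
        rw [mul_eq_one_comm]
        exact (mem_O2 A).mp hA
      · rw [Matrix.det_mul, Matrix.det_transpose, hdA, hdB]; norm_num
      · show mat (g⁻¹ * y) = diagBlock (Aᵀ * B) 1
        rw [mat_mul, mat_inv, hgA, hyB, hdA, hdB, diagBlock_transpose, diagBlock_mul]
        norm_num
    have : g * (g⁻¹ * y) = y := by group
    rw [← this]
    exact mul_mem hgH (hSO2 hmem)

end Aux

/-- A closed subgroup `H` of `SO(3, ℝ)` containing the standard
`SO(2)` (rotations about the third axis) is exactly one of: this copy of `SO(2)`,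
its normalizer `{diag(A, det A) : A ∈ O(2, ℝ)} ≅ O(2)`, or all of `SO(3, ℝ)`. -/
theorem closed_subgroup_of_SO3_containing_SO2
    (H : Subgroup ↥SO3) (hclosed : IsClosed (H : Set ↥SO3))
    (hSO2 : stdSO2 ⊆ (H : Set ↥SO3)) :
    (H : Set ↥SO3) = stdSO2 ∨ (H : Set ↥SO3) = stdO2 ∨ H = ⊤ := by
  by_cases h1 : (H : Set ↥SO3) ⊆ stdSO2
  · exact Or.inl (subset_antisymm h1 hSO2)
  · obtain ⟨g, hgH, hg⟩ := Set.not_subset.mp h1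
    by_cases h2 : (H : Set ↥SO3) ⊆ stdO2
    · exact Or.inr (Or.inl (eq_stdO2 H hSO2 h2 g hgH hg))
    · obtain ⟨g', hg'H, hg'⟩ := Set.not_subset.mp h2
      exact Or.inr (Or.inr (eq_top_of_full H hSO2 (entSet_full H hSO2 g' hg'H hg')))
end
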